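/- arXiv:2209.07963 — 2 statements merged into one kernel-verified Lean document; each statement's English description precedes it below -/
import Mathlib

section
/- For all n ≥ 2 and all j with 1 < j < n, the composite (written left to right) of the transposition s_{n;n} followed by the deletion d_{j;n} equals the composite of d_{j;n} followed by s_{n-1;n-1}; that is, s_{n;n} d_{j;n} = d_{j;n} s_{n-1;n-1} as partial permutations from {1,…,n} to {1,…,n-1}. (Relation R1) -/
/-- Left-to-right composition of partial maps (maps written on the right):
`pcomp f g` is the composite `fg`, defined at `x` exactly when `x ∈ dom f`
and `(x)f ∈ dom g`. -/
def pcomp {α β γ : Type} (f : α → Option β) (g : β → Option γ) : α → Option γ :=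
  fun x => (f x).bind g

/-- The inversion `s_{i;n}`: for `i < n` the transposition `(i, i+1)` of `S_n`,
and for `i = n` the transposition `(1, n)`, viewed as a partial permutation
defined on `{1, …, n}`. -/
def sTn (i n : ℕ) : ℕ → Option ℕ := fun j =>
  if 1 ≤ j ∧ j ≤ n then
    some (if i = n then (if j = 1 then n else if j = n then 1 else j)
          else (if j = i then i + 1 else if j = i + 1 then i else j))
  else none

/-- The deletion `d_{i;n}`: the unique order-preserving partial permutation from
`{1, …, n}` to `{1, …, n-1}` with domain `{1, …, n} \ {i}`:
`(j)d_{i;n} = j` for `j < i` and `(j)d_{i;n} = j - 1` for `j > i`. -/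
def delP (i n : ℕ) : ℕ → Option ℕ := fun j =>
  if 1 ≤ j ∧ j ≤ n ∧ j ≠ i then (if j < i then some j else some (j - 1)) else none

/-- The rotation `c_n = (1, 2, …, n)`: `(j)c_n = j + 1` for `j < n` and `(n)c_n = 1`,
as a partial permutation defined on `{1, …, n}`. -/
def rotC (n : ℕ) : ℕ → Option ℕ := fun j =>
  if 1 ≤ j ∧ j ≤ n then some (if j = n then 1 else j + 1) else none

/-- The reflection `α_n`: `(j)α_n = n + 1 - j`, as a partial permutation defined
on `{1, …, n}`. -/
def refA (n : ℕ) : ℕ → Option ℕ := fun j =>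
  if 1 ≤ j ∧ j ≤ n then some (n + 1 - j) else none

/-- `ppow f k` is the `k`-th power of `f` under left-to-right composition. -/
def ppow (f : ℕ → Option ℕ) : ℕ → (ℕ → Option ℕ)
  | 0 => fun x => some x
  | k + 1 => pcomp (ppow f k) f

/-- **Relation R1**: for all `n ≥ 2` and `1 < j < n`,
`s_{n;n} d_{j;n} = d_{j;n} s_{n-1;n-1}` as partial permutations from
`{1,…,n}` to `{1,…,n-1}` (composition written left to right). -/
theorem relation_R1 (n j : ℕ) (hn : 2 ≤ n) (hj1 : 1 < j) (hj2 : j < n) :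
    pcomp (sTn n n) (delP j n) = pcomp (delP j n) (sTn (n - 1) (n - 1)) := by
  funext x
  simp only [pcomp, sTn, delP]
  split_ifs
  all_goals try simp only [Option.bind_some, Option.bind_none, delP, sTn, Option.some.injEq]
  all_goals try omega
  all_goals split_ifs
  all_goals try simp only [Option.bind_some, Option.bind_none, Option.some.injEq]
  all_goals omega
end

section
/- Let f be an orientation-preserving partial permutation from {1,…,m} to {1,…,n}, i.e. f ∈ POPI_{m,n}. Then there exists a natural number r such that the composite (left to right) of f followed by the r-th power of the rotation c_n is order preserving, i.e. f c_n^r ∈ POI_{m,n}. -/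
/-- The composite (left to right) of a word `t` of inversions `s_{i;m}` from `T_m`
(given by its list of indices `i`). -/
def invWord (m : ℕ) (t : List ℕ) : ℕ → Option ℕ :=
  t.foldr (fun i g => pcomp (sTn i m) g) (fun x => some x)

/-- `CyclicDescent f (i, j)`: `i` and `j` are cyclically consecutive elements of
the domain of `f` (either consecutive in the domain, or `i` is the maximum and `j`
the minimum of the domain) and `(i)f > (j)f`; these are exactly the cyclic
descents of the sequence `((x_1)f, …, (x_k)f)` where `dom(f) = {x_1 < ⋯ < x_k}`. -/
def CyclicDescent (f : ℕ → Option ℕ) (p : ℕ × ℕ) : Prop :=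
  ∃ a b : ℕ, f p.1 = some a ∧ f p.2 = some b ∧ b < a ∧
    ((p.1 < p.2 ∧ ∀ l : ℕ, p.1 < l → l < p.2 → f l = none) ∨
     (p.2 < p.1 ∧ (∀ l : ℕ, l < p.2 → f l = none) ∧ (∀ l : ℕ, p.1 < l → f l = none)))

/-- `f` is orientation preserving (`f ∈ POPI`): with `dom(f) = {x_1 < ⋯ < x_k}`,
the sequence `((x_1)f, …, (x_k)f)` is cyclic, i.e. there is at most one index `i`
with `(x_i)f > (x_{i+1 mod k})f`. -/
def IsPOPI (f : ℕ → Option ℕ) : Prop :=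
  ∀ p q : ℕ × ℕ, CyclicDescent f p → CyclicDescent f q → p = q

/-- `f` is order preserving (`f ∈ POI`): for all `i, j` in the domain of `f`,
`i < j` implies `(i)f < (j)f`. -/
def IsPOI (f : ℕ → Option ℕ) : Prop :=
  ∀ i j a b : ℕ, f i = some a → f j = some b → i < j → a < b

lemma ppow_rot (n r : ℕ) : ∀ j, 1 ≤ j → j ≤ n →
    ppow (rotC n) r j = some ((j - 1 + r) % n + 1) := by
  induction r with
  | zero =>
    intro j h1 h2
    show some j = _
    rw [Nat.mod_eq_of_lt (by omega)]
    congr 1; omega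
  | succ k ih =>
    intro j h1 h2
    show pcomp (ppow (rotC n) k) (rotC n) j = _
    unfold pcomp
    rw [ih j h1 h2]
    show rotC n ((j - 1 + k) % n + 1) = _
    set a := (j - 1 + k) % n with ha
    have han : a < n := Nat.mod_lt _ (by omega)
    unfold rotC
    rw [if_pos ⟨by omega, by omega⟩]
    congr 1
    obtain ⟨q, hq⟩ : ∃ q, j - 1 + k = n * q + a := ⟨(j - 1 + k) / n, by
      rw [ha]; exact (Nat.div_add_mod _ _).symm⟩
    have hmod : (j - 1 + (k + 1)) % n = (a + 1) % n := by
      have : j - 1 + (k + 1) = n * q + (a + 1) := by omega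
      rw [this, Nat.mul_add_mod]
    by_cases hcase : a + 1 = n
    · rw [if_pos hcase, hmod, hcase, Nat.mod_self]
    · rw [if_neg hcase, hmod, Nat.mod_eq_of_lt (by omega)]

lemma exists_cd (f : ℕ → Option ℕ) :
    ∀ d x y a b, y - x ≤ d → f x = some a → f y = some b → x < y → b < a →
    ∃ x' y', x ≤ x' ∧ x' < y' ∧ y' ≤ y ∧ CyclicDescent f (x', y') := by
  intro d
  induction d with
  | zero => intro x y a b h _ _ hxy _; omega
  | succ d ih =>
    intro x y a b hd hfx hfy hxy hba
    by_cases hmid : ∀ l, x < l → l < y → f l = none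
    · exact ⟨x, y, le_refl _, hxy, le_refl _, a, b, hfx, hfy, hba, Or.inl ⟨hxy, hmid⟩⟩
    · push_neg at hmid
      obtain ⟨l, hxl, hly, hl⟩ := hmid
      obtain ⟨u, hu⟩ : ∃ u, f l = some u := Option.ne_none_iff_exists'.mp hl
      by_cases hcase : u < a
      · obtain ⟨x', y', h1, h2, h3, h4⟩ := ih x l a u (by omega) hfx hu hxl hcase
        exact ⟨x', y', h1, h2, by omega, h4⟩
      · obtain ⟨x', y', h1, h2, h3, h4⟩ := ih l y u b (by omega) hu hfy hly (by omega)
        exact ⟨x', y', by omega, h2, h3, h4⟩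

/-- If `f ∈ POPI_{m,n}` is an orientation-preserving partial permutation from
`{1,…,m}` to `{1,…,n}`, then there is a natural number `r` such that the composite
(left to right) of `f` with the `r`-th power of the rotation `c_n` is order
preserving: `f c_n^r ∈ POI_{m,n}`. -/
theorem popi_rotate_to_poi (m n : ℕ) (f : ℕ → Option ℕ)
    (hdom : ∀ i j : ℕ, f i = some j → 1 ≤ i ∧ i ≤ m ∧ 1 ≤ j ∧ j ≤ n)
    (hinj : ∀ i i' j : ℕ, f i = some j → f i' = some j → i = i')
    (hpopi : IsPOPI f) :
    ∃ r : ℕ, IsPOI (pcomp f (ppow (rotC n) r)) := by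
  by_cases hdesc : ∃ x y a b, f x = some a ∧ f y = some b ∧ x < y ∧ b < a
  case neg =>
    push_neg at hdesc
    refine ⟨0, ?_⟩
    intro i j u v hi hj hij
    have hi' : f i = some u := by
      have : (f i).bind (fun x => some x) = some u := hi
      cases hfi : f i <;> rw [hfi] at this <;> simpa using this
    have hj' : f j = some v := by
      have : (f j).bind (fun x => some x) = some v := hj
      cases hfj : f j <;> rw [hfj] at this <;> simpa using this
    rcases Nat.lt_trichotomy u v with h | h | h
    · exact h
    · exact absurd (hinj i j u hi' (h ▸ hj')) (by omega)
    · have := hdesc i j u v hi' hj' hij; omega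
  case pos =>
    obtain ⟨x, y, a0, b0, hfx, hfy, hxy, hba⟩ := hdesc
    obtain ⟨p1, p2, _, hp12, _, hcd⟩ :=
      exists_cd f (y - x) x y a0 b0 le_rfl hfx hfy hxy hba
    obtain ⟨a, b, hfp1, hfp2, hab, hor⟩ := hcd
    simp only at hfp1 hfp2
    have hmid : ∀ l, p1 < l → l < p2 → f l = none := by
      rcases hor with ⟨_, h⟩ | ⟨h, _⟩
      · exact h
      · omega
    have hcdp : CyclicDescent f (p1, p2) :=
      ⟨a, b, hfp1, hfp2, hab, Or.inl ⟨hp12, hmid⟩⟩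
    -- Claim A: any descent pair straddles (p1, p2)
    have claimA : ∀ x y a b, f x = some a → f y = some b → x < y → b < a →
        x ≤ p1 ∧ p2 ≤ y := by
      intro x y a b hfx hfy hxy hba
      obtain ⟨x', y', h1, h2, h3, h4⟩ :=
        exists_cd f (y - x) x y a b le_rfl hfx hfy hxy hba
      have := hpopi (x', y') (p1, p2) h4 hcdp
      rw [Prod.mk.injEq] at this
      omega
    -- minimum of domain
    have hex : ∃ x, (f x).isSome := ⟨p1, by rw [hfp1]; rfl⟩
    set x0 := Nat.find hex with hx0def
    obtain ⟨c, hc⟩ : ∃ c, f x0 = some c :=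
      Option.isSome_iff_exists.mp (Nat.find_spec hex)
    have hx0min : ∀ l, l < x0 → f l = none := fun l hl =>
      Option.not_isSome_iff_eq_none.mp (Nat.find_min hex hl)
    have hx0le : ∀ x u, f x = some u → x0 ≤ x := fun x u hu =>
      Nat.find_min' hex (by rw [hu]; rfl)
    -- maximum of domain
    set xM := Nat.findGreatest (fun x => (f x).isSome) m with hxMdef
    have hp1some : (f p1).isSome := by rw [hfp1]; rfl
    have hxMsome : (f xM).isSome :=
      Nat.findGreatest_spec (P := fun x => (f x).isSome) (hdom p1 a hfp1).2.1 hp1some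
    obtain ⟨cm, hcm⟩ : ∃ cm, f xM = some cm := Option.isSome_iff_exists.mp hxMsome
    have hxMge : ∀ x u, f x = some u → x ≤ xM := by
      intro x u hu
      have hs : (f x).isSome := by rw [hu]; rfl
      exact Nat.le_findGreatest (P := fun x => (f x).isSome) (hdom x u hu).2.1 hs
    have hxMmax : ∀ l, xM < l → f l = none := by
      intro l hl
      by_cases hlm : l ≤ m
      · exact Option.not_isSome_iff_eq_none.mp (Nat.findGreatest_is_greatest hl hlm)
      · cases hfl : f l with
        | none => rfl
        | some u => exact absurd (hdom l u hfl).2.1 (by omega)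
    have hx0p1 : x0 ≤ p1 := hx0le p1 a hfp1
    have hp2xM : p2 ≤ xM := hxMge p2 b hfp2
    have hx0xM : x0 < xM := by omega
    -- the wrap value is below c
    have hcmc : cm < c := by
      rcases Nat.lt_trichotomy cm c with h | h | h
      · exact h
      · exact absurd (hinj xM x0 cm hcm (h ▸ hc)) (by omega)
      · have hw : CyclicDescent f (xM, x0) :=
          ⟨cm, c, hcm, hc, h, Or.inr ⟨hx0xM, hx0min, hxMmax⟩⟩
        have := hpopi (xM, x0) (p1, p2) hw hcdp
        rw [Prod.mk.injEq] at this
        omega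
    -- Claim B
    have claimB1 : ∀ x u, f x = some u → x ≤ p1 → c ≤ u := by
      intro x u hu hx
      rcases Nat.lt_trichotomy x0 x with h | h | h
      · by_contra hcu
        have := claimA x0 x c u hc hu h (by omega)
        omega
      · rw [← h, hc] at hu; have := Option.some.inj hu; omega
      · exact absurd (hx0le x u hu) (by omega)
    have claimB2 : ∀ x u, f x = some u → p2 ≤ x → u < c := by
      intro x u hu hx
      rcases Nat.lt_trichotomy x xM with h | h | h
      · rcases Nat.lt_trichotomy u cm with h' | h' | h'
        · omega
        · exact absurd (hinj x xM u hu (h' ▸ hcm)) (by omega)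
        · have := claimA x xM u cm hu hcm h h'
          omega
      · rw [h, hcm] at hu; have := Option.some.inj hu; omega
      · exact absurd (hxMge x u hu) (by omega)
    have hside : ∀ x u, f x = some u → x ≤ p1 ∨ p2 ≤ x := by
      intro x u hu
      by_contra h
      push_neg at h
      rw [hmid x (by omega) (by omega)] at hu
      exact absurd hu (by simp)
    have hcn : 1 ≤ c ∧ c ≤ n := ⟨(hdom x0 c hc).2.2.1, (hdom x0 c hc).2.2.2⟩
    -- the rotation amount
    refine ⟨n + 1 - c, ?_⟩
    intro i j u v hi hj hij
    obtain ⟨ui, hui, hu⟩ : ∃ ui, f i = some ui ∧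
        ppow (rotC n) (n + 1 - c) ui = some u := by
      have h : (f i).bind (ppow (rotC n) (n + 1 - c)) = some u := hi
      cases hfi : f i with
      | none => rw [hfi] at h; exact absurd h (by simp)
      | some w => rw [hfi] at h; exact ⟨w, rfl, h⟩
    obtain ⟨vj, hvj, hv⟩ : ∃ vj, f j = some vj ∧
        ppow (rotC n) (n + 1 - c) vj = some v := by
      have h : (f j).bind (ppow (rotC n) (n + 1 - c)) = some v := hj
      cases hfj : f j with
      | none => rw [hfj] at h; exact absurd h (by simp)
      | some w => rw [hfj] at h; exact ⟨w, rfl, h⟩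
    have hui_b := hdom i ui hui
    have hvj_b := hdom j vj hvj
    rw [ppow_rot n _ ui hui_b.2.2.1 hui_b.2.2.2] at hu
    rw [ppow_rot n _ vj hvj_b.2.2.1 hvj_b.2.2.2] at hv
    have hue : u = (ui - 1 + (n + 1 - c)) % n + 1 := (Option.some.inj hu).symm
    have hve : v = (vj - 1 + (n + 1 - c)) % n + 1 := (Option.some.inj hv).symm
    have hrot : ∀ w, 1 ≤ w → w ≤ n →
        (w - 1 + (n + 1 - c)) % n = if c ≤ w then w - c else w + n - c := by
      intro w h1 h2
      by_cases hcw : c ≤ w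
      · rw [if_pos hcw]
        have he : w - 1 + (n + 1 - c) = n + (w - c) := by omega
        rw [he, Nat.add_mod_left, Nat.mod_eq_of_lt (by omega)]
      · rw [if_neg hcw]
        have he : w - 1 + (n + 1 - c) = w + n - c := by omega
        rw [he, Nat.mod_eq_of_lt (by omega)]
    rw [hrot ui hui_b.2.2.1 hui_b.2.2.2] at hue
    rw [hrot vj hvj_b.2.2.1 hvj_b.2.2.2] at hve
    have hneq : ui ≠ vj := fun h => by
      exact absurd (hinj i j ui hui (h ▸ hvj)) (by omega)
    rcases hside i ui hui with hi1 | hi2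
    · rcases hside j vj hvj with hj1 | hj2
      · -- both low side: ascent
        have hij' : ui < vj := by
          rcases Nat.lt_trichotomy ui vj with h | h | h
          · exact h
          · exact absurd h hneq
          · have := claimA i j ui vj hui hvj hij h
            omega
        have h1 := claimB1 i ui hui hi1
        have h2 := claimB1 j vj hvj hj1
        rw [if_pos h1] at hue
        rw [if_pos h2] at hve
        omega
      · -- crossing
        have h1 := claimB1 i ui hui hi1
        have h2 := claimB2 j vj hvj hj2
        rw [if_pos h1] at hue
        rw [if_neg (by omega)] at hve
        have := hui_b.2.2.2
        have := hvj_b.2.2.1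
        omega
    · rcases hside j vj hvj with hj1 | hj2
      · omega
      · have hij' : ui < vj := by
          rcases Nat.lt_trichotomy ui vj with h | h | h
          · exact h
          · exact absurd h hneq
          · have := claimA i j ui vj hui hvj hij h
            omega
        have h1 := claimB2 i ui hui hi2
        have h2 := claimB2 j vj hvj hj2
        rw [if_neg (by omega)] at hue
        rw [if_neg (by omega)] at hve
        omega
end
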